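/- For a prime p ≥ 3, the number of symmetric basic building block classes (binary vectors m of length p with m_0 = 0 yielding a symmetric class) is exactly 2^{(p-1)/2}. -/

import Mathlib

/-- Entry `t_{0,j}` of the zeroth building block: `t_{0,j} = [j]_ℤ + m_j · p`. -/
def t0 (p : ℕ) (m : ZMod p → ℕ) (j : ZMod p) : ℤ := (j.val : ℤ) + (m j : ℤ) * p

namespace Stmt7

lemma fin2_cases (x : Fin 2) : x = 0 ∨ x = 1 := by revert x; decide

lemma fin2_val_le (x : Fin 2) : (x : ℕ) ≤ 1 := by omega

lemma valCast {p : ℕ} [NeZero p] (j : ZMod p) : ((j.val : ℕ) : ZMod p) = j := by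
  simp [ZMod.natCast_val, ZMod.cast_id]

/-- extension of a bit-vector to ℕ -/
def bext (n : ℕ) (b : Fin n → Fin 2) : ℕ → Fin 2 :=
  fun w => if h : w < n then b ⟨w, h⟩ else 0

/-- the "lower half" bits: position 0 is forced to 0, position v (1 ≤ v) is bit v-1 -/
def low (n : ℕ) (b : Fin n → Fin 2) : ℕ → Fin 2 :=
  fun v => if v = 0 then 0 else bext n b (v - 1)

/-- k = (position of top set bit) + 1, or 0 if no set bit -/
def kof (n : ℕ) (b : Fin n → Fin 2) : ℕ :=
  (Finset.univ.filter fun i : Fin n => b i = 1).sup (fun i => (i : ℕ) + 1)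

def sof (n : ℕ) (b : Fin n → Fin 2) : ℕ := 2 * kof n b - 1

/-- the symmetric vector determined by bits `b`, as a function on ℕ -/
def mk' (n : ℕ) (b : Fin n → Fin 2) : ℕ → Fin 2 := fun v =>
  if v ≤ kof n b - 1 then low n b v
  else if v ≤ sof n b then 1 - low n b (sof n b - v)
  else 0

def F (p n : ℕ) (b : Fin n → Fin 2) : ZMod p → Fin 2 := fun j => mk' n b j.val

/-- sup of positions of ones, for recovering k from m -/
def supof (p : ℕ) [NeZero p] (m : ZMod p → Fin 2) : ℕ :=
  (Finset.univ.filter fun j : ZMod p => m j = 1).sup (fun j => j.val)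

def km (p : ℕ) [NeZero p] (m : ZMod p → Fin 2) : ℕ := (supof p m + 1) / 2

def G (p n : ℕ) [NeZero p] (m : ZMod p → Fin 2) : Fin n → Fin 2 := fun i =>
  if (i : ℕ) + 1 < km p m then m (((i : ℕ) + 1 : ℕ) : ZMod p)
  else if (i : ℕ) + 1 = km p m then 1 else 0

section basic

variable {n : ℕ} {b : Fin n → Fin 2}

lemma kof_le : kof n b ≤ n := by
  apply Finset.sup_le
  intro i _
  exact i.isLt

lemma le_kof {i : Fin n} (h : b i = 1) : (i : ℕ) + 1 ≤ kof n b :=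
  Finset.le_sup (f := fun i : Fin n => (i : ℕ) + 1) (by simp [h])

lemma bit_eq_zero_of_kof_lt {i : Fin n} (h : kof n b < (i : ℕ) + 1) : b i = 0 := by
  rcases fin2_cases (b i) with h0 | h1
  · exact h0
  · exact absurd (le_kof h1) (by omega)

lemma top_bit (hk : 1 ≤ kof n b) : ∃ i : Fin n, b i = 1 ∧ (i : ℕ) + 1 = kof n b := by
  have hne : (Finset.univ.filter fun i : Fin n => b i = 1).Nonempty := by
    by_contra h
    rw [Finset.not_nonempty_iff_eq_empty] at h
    simp [kof, h] at hk
  obtain ⟨i, hi, hmax⟩ := Finset.exists_mem_eq_sup _ hne (fun i : Fin n => (i : ℕ) + 1)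
  exact ⟨i, by simpa using hi, hmax.symm⟩

lemma mk'_zero' : mk' n b 0 = 0 := by
  simp [mk', low]

lemma mk'_eq_zero_of_sof_lt {v : ℕ} (hv : sof n b < v) : mk' n b v = 0 := by
  have : ¬ v ≤ kof n b - 1 := by unfold sof at hv; omega
  simp [mk', this, hv, not_le.mpr hv]

lemma val_le_sof_of_mk'_eq_one {v : ℕ} (h : mk' n b v = 1) : v ≤ sof n b := by
  by_contra hc
  rw [mk'_eq_zero_of_sof_lt (by omega)] at h
  exact absurd h (by decide)

/-- antisymmetry: for `k ≥ 1` and `v ≤ s`, `mk' v + mk' (s - v) = 1` (as naturals). -/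
lemma antisym (hk : 1 ≤ kof n b) {v : ℕ} (hv : v ≤ sof n b) :
    ((mk' n b v : ℕ)) + ((mk' n b (sof n b - v) : ℕ)) = 1 := by
  have hs : sof n b = 2 * kof n b - 1 := rfl
  by_cases hvk : v ≤ kof n b - 1
  · have h1 : mk' n b v = low n b v := by simp [mk', hvk]
    have h2 : ¬ (sof n b - v ≤ kof n b - 1) := by omega
    have h3 : sof n b - v ≤ sof n b := by omega
    have h4 : sof n b - (sof n b - v) = v := by omega
    have h5 : mk' n b (sof n b - v) = 1 - low n b v := by
      simp [mk', h2, h3, h4]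
    rw [h1, h5]
    rcases fin2_cases (low n b v) with h | h <;> simp [h]
  · have h1 : mk' n b v = 1 - low n b (sof n b - v) := by simp [mk', hvk, hv]
    have h2 : sof n b - v ≤ kof n b - 1 := by omega
    have h5 : mk' n b (sof n b - v) = low n b (sof n b - v) := by simp [mk', h2]
    rw [h1, h5]
    rcases fin2_cases (low n b (sof n b - v)) with h | h <;> simp [h]

lemma mk'_sof (hk : 1 ≤ kof n b) : mk' n b (sof n b) = 1 := by
  have h2 : ¬ (sof n b ≤ kof n b - 1) := by unfold sof; omega
  simp [mk', h2, low]

lemma F_zero_of_kof_eq_zero (hk : kof n b = 0) : ∀ v, mk' n b v = 0 := by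
  intro v
  rcases Nat.eq_zero_or_pos v with rfl | hv
  · exact mk'_zero'
  · exact mk'_eq_zero_of_sof_lt (by unfold sof; omega)

end basic

section images

variable {p : ℕ} [NeZero p] (m : ZMod p → Fin 2)

/-- abbreviation matching the statement -/
def tt (m : ZMod p → Fin 2) : ZMod p → ℤ := t0 p (fun j => ((m j : ℕ)))

lemma tt_cast (j : ZMod p) : ((tt m j : ℤ) : ZMod p) = j := by
  simp [tt, t0, valCast]

lemma C_of_image {σ : ZMod p}
    (h : Finset.image (tt m) Finset.univ =
      Finset.image (fun j => tt m σ - tt m j) Finset.univ) :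
    ∀ j, tt m j + tt m (σ - j) = tt m σ := by
  intro j
  have hmem : tt m σ - tt m j ∈ Finset.image (fun j => tt m σ - tt m j) Finset.univ :=
    Finset.mem_image_of_mem _ (Finset.mem_univ j)
  rw [← h] at hmem
  obtain ⟨k, -, hk⟩ := Finset.mem_image.mp hmem
  have hcast : k = σ - j := by
    have := congrArg (fun z : ℤ => (z : ZMod p)) hk
    simpa [tt_cast, sub_eq_iff_eq_add] using this
  rw [← hcast, hk]; ring

lemma image_of_C {σ : ZMod p}
    (h : ∀ j, tt m j + tt m (σ - j) = tt m σ) :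
    Finset.image (tt m) Finset.univ =
      Finset.image (fun j => tt m σ - tt m j) Finset.univ := by
  have hfun : (fun j => tt m σ - tt m j) = fun j => tt m (σ - j) := by
    funext j
    have := h j
    linarith
  rw [hfun]
  ext z
  simp only [Finset.mem_image, Finset.mem_univ, true_and]
  constructor
  · rintro ⟨j, rfl⟩; exact ⟨σ - j, by simp⟩
  · rintro ⟨j, rfl⟩; exact ⟨σ - j, rfl⟩

end images

section valsub

variable {p : ℕ} [NeZero p]

lemma val_sub_gt {σ j : ZMod p} (h : σ.val < j.val) :
    (σ - j).val = σ.val + p - j.val := by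
  have hj : j.val < p := ZMod.val_lt j
  have h1 : σ.val + p - j.val < p := by omega
  have h2 : ((σ.val + p - j.val : ℕ) : ZMod p) = σ - j := by
    push_cast [Nat.cast_sub (by omega : j.val ≤ σ.val + p)]
    rw [valCast, valCast, ZMod.natCast_self]
    ring
  rw [← h2, ZMod.val_natCast_of_lt h1]

lemma neg_one_val (hp1 : 1 < p) : (-1 : ZMod p).val = p - 1 := by
  have h2 : ((p - 1 : ℕ) : ZMod p) = -1 := by
    push_cast [Nat.cast_sub (by omega : 1 ≤ p)]
    rw [ZMod.natCast_self]
    ring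
  rw [← h2, ZMod.val_natCast_of_lt (by omega)]

end valsub

section membership

variable {p n : ℕ} [NeZero p]

lemma tt_def (m : ZMod p → Fin 2) (j : ZMod p) :
    tt m j = (j.val : ℤ) + ((m j : ℕ) : ℤ) * p := rfl

theorem F_mem (hpn : p = 2 * n + 1) (hn : 1 ≤ n) (b : Fin n → Fin 2) :
    (F p n b) 0 = 0 ∧ ∃ σ : ZMod p,
      (∀ j, tt (F p n b) j ≤ tt (F p n b) σ) ∧
      Finset.image (tt (F p n b)) Finset.univ =
        Finset.image (fun j => tt (F p n b) σ - tt (F p n b) j) Finset.univ := by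
  have hp1 : 1 < p := by omega
  set m := F p n b with hm
  have hmj : ∀ j : ZMod p, m j = mk' n b j.val := fun j => rfl
  have hzero : m 0 = 0 := by
    rw [hmj, ZMod.val_zero, mk'_zero']
  refine ⟨hzero, ?_⟩
  rcases Nat.eq_zero_or_pos (kof n b) with hk | hk
  · -- b = 0, m = 0, σ = -1
    have hm0 : ∀ j : ZMod p, m j = 0 := fun j => by
      rw [hmj]; exact F_zero_of_kof_eq_zero hk _
    have htt : ∀ j : ZMod p, tt m j = (j.val : ℤ) := by
      intro j; rw [tt_def, hm0]; simp
    refine ⟨-1, ?_, ?_⟩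
    · intro j
      rw [htt, htt, neg_one_val hp1]
      have := ZMod.val_lt j
      omega
    · apply image_of_C
      intro j
      have hle : j.val ≤ (-1 : ZMod p).val := by
        rw [neg_one_val hp1]; have := ZMod.val_lt j; omega
      rw [htt, htt, htt, ZMod.val_sub hle, neg_one_val hp1]
      have h1 := ZMod.val_lt j
      have h2 : j.val ≤ p - 1 := by rw [neg_one_val hp1] at hle; exact hle
      omega
  · -- k ≥ 1, σ = sof
    have hsle : sof n b < p := by
      have := kof_le (b := b); unfold sof; omega
    set s := sof n b with hs
    set σ : ZMod p := ((s : ℕ) : ZMod p) with hσ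
    have hσv : σ.val = s := ZMod.val_natCast_of_lt hsle
    have hmσ : m σ = 1 := by rw [hmj, hσv]; exact mk'_sof hk
    have httσ : tt m σ = (s : ℤ) + p := by
      rw [tt_def, hσv, hmσ]
      simp only [Fin.val_one, Nat.cast_one]; ring
    refine ⟨σ, ?_, ?_⟩
    · intro j
      rw [tt_def, httσ]
      have hjlt := ZMod.val_lt j
      rcases fin2_cases (m j) with h | h
      · rw [h]
        simp only [Fin.val_zero, Nat.cast_zero, zero_mul]
        omega
      · have : j.val ≤ s := by
          apply val_le_sof_of_mk'_eq_one (b := b); rw [← hmj]; exact h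
        rw [h]
        simp only [Fin.val_one, Nat.cast_one, one_mul]
        omega
    · apply image_of_C
      intro j
      have hjlt := ZMod.val_lt j
      rw [tt_def, tt_def, httσ]
      by_cases hv : j.val ≤ s
      · have hval : (σ - j).val = s - j.val := by
          rw [ZMod.val_sub (by omega : j.val ≤ σ.val), hσv]
        have hsum : ((mk' n b j.val : ℕ)) + ((mk' n b (s - j.val) : ℕ)) = 1 :=
          antisym hk hv
        rw [hval, hmj, hmj, hval]
        have hsumZ : (((mk' n b j.val : ℕ)) : ℤ) + (((mk' n b (s - j.val) : ℕ)) : ℤ) = 1 := by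
          exact_mod_cast hsum
        push_cast [Nat.cast_sub hv]
        linear_combination (p : ℤ) * hsumZ
      · have hval : (σ - j).val = s + p - j.val := by
          rw [val_sub_gt (by omega), hσv]
        have hm1 : m j = 0 := by
          rw [hmj]; exact mk'_eq_zero_of_sof_lt (by omega)
        have hm2 : m (σ - j) = 0 := by
          rw [hmj, hval]; exact mk'_eq_zero_of_sof_lt (by omega)
        rw [hval, hm1, hm2]
        simp only [Fin.val_zero, Nat.cast_zero, zero_mul]
        omega

end membership

section inj

variable {p n : ℕ} [NeZero p]

lemma supof_F_eq (hpn : p = 2 * n + 1) {b : Fin n → Fin 2} (hk : 1 ≤ kof n b) :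
    supof p (F p n b) = sof n b := by
  have hsle : sof n b < p := by have := kof_le (b := b); unfold sof; omega
  apply le_antisymm
  · apply Finset.sup_le
    intro j hj
    rw [Finset.mem_filter] at hj
    exact val_le_sof_of_mk'_eq_one hj.2
  · have hmem : ((sof n b : ℕ) : ZMod p) ∈
        (Finset.univ.filter fun j : ZMod p => F p n b j = 1) := by
      rw [Finset.mem_filter]
      refine ⟨Finset.mem_univ _, ?_⟩
      show mk' n b (((sof n b : ℕ) : ZMod p)).val = 1
      rw [ZMod.val_natCast_of_lt hsle]
      exact mk'_sof hk
    have := Finset.le_sup (f := fun j : ZMod p => j.val) hmem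
    exact le_of_eq_of_le (ZMod.val_natCast_of_lt hsle).symm this

lemma supof_F_zero {b : Fin n → Fin 2} (hk : kof n b = 0) :
    supof p (F p n b) = 0 := by
  apply Nat.le_antisymm _ (Nat.zero_le _)
  apply Finset.sup_le
  intro j hj
  rw [Finset.mem_filter] at hj
  have : F p n b j = 0 := F_zero_of_kof_eq_zero hk _
  rw [this] at hj
  exact absurd hj.2 (by decide)

lemma km_F (hpn : p = 2 * n + 1) (b : Fin n → Fin 2) :
    km p (F p n b) = kof n b := by
  rcases Nat.eq_zero_or_pos (kof n b) with hk | hk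
  · rw [km, supof_F_zero hk, hk]
  · rw [km, supof_F_eq hpn hk]
    unfold sof
    omega

theorem GF (hpn : p = 2 * n + 1) (b : Fin n → Fin 2) : G p n (F p n b) = b := by
  funext i
  have hkm := km_F hpn b
  unfold G
  rw [hkm]
  by_cases h1 : (i : ℕ) + 1 < kof n b
  · rw [if_pos h1]
    have hlt : (i : ℕ) + 1 < p := by have := kof_le (b := b); omega
    show mk' n b ((((i : ℕ) + 1 : ℕ) : ZMod p)).val = b i
    rw [ZMod.val_natCast_of_lt hlt]
    have h2 : (i : ℕ) + 1 ≤ kof n b - 1 := by omega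
    have h3 : (i : ℕ) + 1 ≠ 0 := by omega
    simp only [mk', if_pos h2, low, if_neg h3, Nat.add_sub_cancel, bext, dif_pos i.isLt]
  · rw [if_neg h1]
    by_cases h2 : (i : ℕ) + 1 = kof n b
    · rw [if_pos h2]
      obtain ⟨i₀, hb, hi₀⟩ := top_bit (b := b) (by omega)
      have : i = i₀ := Fin.ext (by omega)
      rw [this, hb]
    · rw [if_neg h2]
      exact (bit_eq_zero_of_kof_lt (by omega)).symm

end inj

section surj

variable {p n : ℕ} [NeZero p]

theorem FG (hpn : p = 2 * n + 1) (hn : 1 ≤ n) (hp : p.Prime)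
    (m : ZMod p → Fin 2) (h0 : m 0 = 0) (σ : ZMod p)
    (hmax : ∀ j, tt m j ≤ tt m σ)
    (himg : Finset.image (tt m) Finset.univ =
      Finset.image (fun j => tt m σ - tt m j) Finset.univ) :
    F p n (G p n m) = m := by
  have hppos : 0 < p := by omega
  have hC := C_of_image m himg
  rcases fin2_cases (m σ) with hσ0 | hσ1
  · -- zero case
    have hm0 : ∀ j, m j = 0 := by
      intro j
      rcases fin2_cases (m j) with h | h
      · exact h
      · exfalso
        have h1 := hmax j
        rw [tt_def, tt_def, hσ0, h] at h1
        simp only [Fin.val_zero, Nat.cast_zero, zero_mul, Fin.val_one, Nat.cast_one,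
          one_mul] at h1
        have := ZMod.val_lt σ
        omega
    have hsup : supof p m = 0 := by
      apply Nat.le_antisymm _ (Nat.zero_le _)
      apply Finset.sup_le
      intro j hj
      rw [Finset.mem_filter, hm0 j] at hj
      exact absurd hj.2 (by decide)
    have hkm : km p m = 0 := by rw [km, hsup]
    have hG : ∀ i : Fin n, G p n m i = 0 := by
      intro i
      unfold G
      rw [hkm, if_neg (by omega), if_neg (by omega)]
    have hkof : kof n (G p n m) = 0 := by
      apply Nat.le_antisymm _ (Nat.zero_le _)
      apply Finset.sup_le
      intro i hi
      rw [Finset.mem_filter, hG i] at hi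
      exact absurd hi.2 (by decide)
    funext j
    rw [hm0 j]
    exact F_zero_of_kof_eq_zero hkof _
  · -- nonzero case
    set s := σ.val with hs
    have hslt : s < p := ZMod.val_lt σ
    have httσ : tt m σ = (s : ℤ) + p := by
      rw [tt_def, hσ1]
      simp only [Fin.val_one, Nat.cast_one, one_mul]
      rfl
    -- (i) zero beyond s
    have hout : ∀ j : ZMod p, s < j.val → m j = 0 := by
      intro j hj
      rcases fin2_cases (m j) with h | h
      · exact h
      · exfalso
        have h1 := hmax j
        rw [tt_def, httσ, h] at h1
        simp only [Fin.val_one, Nat.cast_one, one_mul] at h1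
        omega
    -- (ii) antisymmetric pairs
    have hpair : ∀ j : ZMod p, j.val ≤ s →
        ((m j : ℕ)) + ((m (σ - j) : ℕ)) = 1 := by
      intro j hj
      have h1 := hC j
      have hval : (σ - j).val = s - j.val := ZMod.val_sub hj
      rw [tt_def, tt_def, httσ, hval] at h1
      rcases fin2_cases (m j) with h | h <;> rcases fin2_cases (m (σ - j)) with h' | h' <;>
        rw [h, h'] at h1 ⊢ <;>
        simp only [Fin.val_zero, Nat.cast_zero, zero_mul, Fin.val_one, Nat.cast_one,
          one_mul] at h1 ⊢ <;>
        omega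
    -- (iii) s is odd
    have hodd : s % 2 = 1 := by
      haveI := Fact.mk hp
      have h2 : (2 : ZMod p) ≠ 0 := by
        intro h
        have h2' : ((2 : ℕ) : ZMod p) = 0 := by exact_mod_cast h
        have : (p : ℕ) ∣ 2 := (ZMod.natCast_eq_zero_iff 2 p).mp h2'
        have := Nat.le_of_dvd (by norm_num) this
        omega
      set j' : ZMod p := (2 : ZMod p)⁻¹ * σ with hj'
      have h2j : (2 : ZMod p) * j' = σ := by
        rw [hj', ← mul_assoc, mul_inv_cancel₀ h2, one_mul]
      have hjj : σ - j' = j' := by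
        rw [← h2j]; ring
      have h1 := hC j'
      rw [hjj, tt_def, httσ] at h1
      have hplt := ZMod.val_lt j'
      rcases fin2_cases (m j') with h | h <;> rw [h] at h1 <;>
        simp only [Fin.val_zero, Nat.cast_zero, zero_mul, Fin.val_one, Nat.cast_one,
          one_mul] at h1 <;>
        omega
    -- bookkeeping
    have hsle : s ≤ 2 * n - 1 := by omega
    set k : ℕ := (s + 1) / 2 with hk
    have hk1 : 1 ≤ k := by omega
    have hkn : k ≤ n := by omega
    have hs2k : s = 2 * k - 1 := by omega
    have hsup : supof p m = s := by
      apply le_antisymm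
      · apply Finset.sup_le
        intro j hj
        rw [Finset.mem_filter] at hj
        by_contra hcon
        have := hout j (by omega)
        rw [this] at hj
        exact absurd hj.2 (by decide)
      · exact Finset.le_sup (f := fun j : ZMod p => j.val)
          (Finset.mem_filter.mpr ⟨Finset.mem_univ _, hσ1⟩)
    have hkm : km p m = k := by rw [km, hsup]
    set b : Fin n → Fin 2 := G p n m with hb
    have hbi : ∀ i : Fin n, b i =
        if (i : ℕ) + 1 < k then m (((i : ℕ) + 1 : ℕ) : ZMod p)
        else if (i : ℕ) + 1 = k then 1 else 0 := by
      intro i; rw [hb]; unfold G; rw [hkm]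
    have hkof : kof n b = k := by
      apply le_antisymm
      · apply Finset.sup_le
        intro i hi
        rw [Finset.mem_filter, hbi i] at hi
        by_contra hcon
        rw [if_neg (by omega), if_neg (by omega)] at hi
        exact absurd hi.2 (by decide)
      · have hi₀ : k - 1 < n := by omega
        have : b ⟨k - 1, hi₀⟩ = 1 := by
          rw [hbi]
          simp only [Fin.val_mk]
          rw [if_neg (by omega), if_pos (by omega)]
        have h2 : (k - 1) + 1 ≤ kof n b := le_kof this
        omega
    have hsof : sof n b = s := by unfold sof; omega
    -- low agrees with m below k
    have hlow : ∀ w : ℕ, w ≤ k - 1 → low n b w = m ((w : ℕ) : ZMod p) := by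
      intro w hw
      rcases Nat.eq_zero_or_pos w with rfl | hwpos
      · rw [low, if_pos rfl]
        simp only [Nat.cast_zero, h0]
      · rw [low, if_neg (by omega), bext, dif_pos (by omega : w - 1 < n), hbi]
        simp only
        rw [if_pos (by omega : (w - 1) + 1 < k)]
        congr 1
        push_cast [Nat.sub_add_cancel hwpos]
        ring
    -- final extensional equality
    funext j
    have hjval : ((j.val : ℕ) : ZMod p) = j := valCast j
    show mk' n b j.val = m j
    by_cases hv1 : j.val ≤ k - 1
    · rw [mk', hkof, if_pos hv1, hlow _ hv1, hjval]
    · by_cases hv2 : j.val ≤ s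
      · rw [mk', hkof, hsof, if_neg hv1, if_pos hv2]
        have hw : s - j.val ≤ k - 1 := by omega
        rw [hlow _ hw]
        have hσj : σ - j = ((s - j.val : ℕ) : ZMod p) := by
          rw [← valCast (σ - j), ZMod.val_sub (by omega : j.val ≤ σ.val)]
        rw [← hσj]
        have hsum := hpair j hv2
        rcases fin2_cases (m j) with h | h <;> rcases fin2_cases (m (σ - j)) with h' | h' <;>
          rw [h, h'] at hsum ⊢
        · exact absurd hsum (by decide)
        · decide
        · decide
        · exact absurd hsum (by decide)
      · rw [mk', hkof, hsof, if_neg hv1, if_neg hv2, (hout j (by omega)).symm]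

end surj

end Stmt7

/-- for a prime `p ≥ 3`, there are exactly `2^((p-1)/2)` binary vectors
`m` of length `p` with `m 0 = 0` whose building block class is symmetric. -/
theorem stmt7 (p : ℕ) [NeZero p] (hp : p.Prime) (hp3 : 3 ≤ p) :
    ({m : ZMod p → Fin 2 | m 0 = 0 ∧
        ∃ σ : ZMod p,
          (∀ j, t0 p (fun j => (m j : ℕ)) j ≤ t0 p (fun j => (m j : ℕ)) σ) ∧
          Finset.image (t0 p (fun j => (m j : ℕ))) Finset.univ =
            Finset.image (fun j => t0 p (fun j => (m j : ℕ)) σ -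
              t0 p (fun j => (m j : ℕ)) j) Finset.univ}).ncard
      = 2 ^ ((p - 1) / 2) := by
  classical
  have hodd : p % 2 = 1 := by
    rcases hp.eq_two_or_odd with h | h
    · omega
    · exact h
  set n := (p - 1) / 2 with hn
  have hpn : p = 2 * n + 1 := by omega
  have hn1 : 1 ≤ n := by omega
  set S : Set (ZMod p → Fin 2) := {m : ZMod p → Fin 2 | m 0 = 0 ∧
      ∃ σ : ZMod p,
        (∀ j, t0 p (fun j => (m j : ℕ)) j ≤ t0 p (fun j => (m j : ℕ)) σ) ∧
        Finset.image (t0 p (fun j => (m j : ℕ))) Finset.univ =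
          Finset.image (fun j => t0 p (fun j => (m j : ℕ)) σ -
            t0 p (fun j => (m j : ℕ)) j) Finset.univ} with hS
  have hmem : ∀ b : Fin n → Fin 2, Stmt7.F p n b ∈ S := fun b => Stmt7.F_mem hpn hn1 b
  have e : (Fin n → Fin 2) ≃ S := by
    refine Equiv.ofBijective (fun b => ⟨Stmt7.F p n b, hmem b⟩) ⟨?_, ?_⟩
    · intro b b' h
      have h2 : Stmt7.F p n b = Stmt7.F p n b' := congrArg Subtype.val h
      have h3 := congrArg (Stmt7.G p n) h2
      rwa [Stmt7.GF hpn, Stmt7.GF hpn] at h3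
    · rintro ⟨m, hm0, σ, hmax, himg⟩
      exact ⟨Stmt7.G p n m, Subtype.ext (Stmt7.FG hpn hn1 hp m hm0 σ hmax himg)⟩
  calc S.ncard = Nat.card S := (Nat.card_coe_set_eq _).symm
    _ = Nat.card (Fin n → Fin 2) := (Nat.card_congr e).symm
    _ = 2 ^ n := by simp [Nat.card_eq_fintype_card]
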